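/- Let $Q$ be a polynomial in $n$ variables of degree at most $d$, and define $\|Q\|_I := \sup_{x,x' \in I} |Q(x)-Q(x')|$ for bounded sets $I$. Then for any $x \in \mathbb{R}^n$ and $0 < r \leq R$, one has $\|Q\|_{B(x,R)} \leq C_{d,n} (R/r)^d \|Q\|_{B(x,r)}$ for a constant $C_{d,n}$ depending only on $d$ and $n$. -/

import Mathlib

open MvPolynomial Polynomial

lemma myEvalAeval {n : ℕ} (Q : MvPolynomial (Fin n) ℝ) (g : Fin n → Polynomial ℝ) (t : ℝ) :
    (MvPolynomial.aeval g Q).eval t = MvPolynomial.eval (fun i => (g i).eval t) Q := by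
  rw [MvPolynomial.aeval_def, MvPolynomial.polynomial_eval_eval₂]
  have h : (Polynomial.evalRingHom t).comp (algebraMap ℝ (Polynomial ℝ)) = RingHom.id ℝ := by
    ext c; simp
  rw [h]
  rfl

lemma myNatDegreeAeval {n : ℕ} (Q : MvPolynomial (Fin n) ℝ) (g : Fin n → Polynomial ℝ)
    (hg : ∀ i, (g i).natDegree ≤ 1) : (MvPolynomial.aeval g Q).natDegree ≤ Q.totalDegree := by
  conv_lhs => rw [Q.as_sum, map_sum]
  apply Polynomial.natDegree_sum_le_of_forall_le
  intro m hm
  rw [MvPolynomial.aeval_monomial]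
  refine (Polynomial.natDegree_mul_le).trans ?_
  have h1 : (algebraMap ℝ (Polynomial ℝ) (MvPolynomial.coeff m Q)).natDegree = 0 := by
    simp [Polynomial.algebraMap_eq]
  rw [h1, zero_add]
  refine le_trans ?_ (MvPolynomial.le_totalDegree hm)
  rw [Finsupp.prod, Finsupp.sum]
  refine (Polynomial.natDegree_prod_le _ _).trans ?_
  refine Finset.sum_le_sum fun i _ => ?_
  refine (Polynomial.natDegree_pow_le).trans ?_
  calc m i * (g i).natDegree ≤ m i * 1 := Nat.mul_le_mul_left _ (hg i)
    _ = m i := Nat.mul_one _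

/-- The seminorm `‖Q‖_I := sup_{x,x' ∈ I} |Q(x)-Q(x')|` of a polynomial on a set `I`. -/
noncomputable def polySeminorm (n : ℕ) (Q : MvPolynomial (Fin n) ℝ)
    (I : Set (EuclideanSpace ℝ (Fin n))) : ℝ :=
  sSup {t : ℝ | ∃ a ∈ I, ∃ b ∈ I,
    t = |MvPolynomial.eval (fun i => a i) Q - MvPolynomial.eval (fun i => b i) Q|}

theorem stmt_0 (d n : ℕ) (hd : 1 ≤ d) (hn : 1 ≤ n) :
    ∃ C : ℝ, 0 < C ∧ ∀ (Q : MvPolynomial (Fin n) ℝ), Q.totalDegree ≤ d →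
      ∀ (x : EuclideanSpace ℝ (Fin n)) (r R : ℝ), 0 < r → r ≤ R →
        polySeminorm n Q (Metric.ball x R) ≤
          C * (R / r) ^ d * polySeminorm n Q (Metric.ball x r) := by
  classical
  have hd1 : (1:ℝ) ≤ (d:ℝ) := by exact_mod_cast hd
  have hd0 : (0:ℝ) < (d:ℝ) := by linarith
  refine ⟨2*((d:ℝ)+1)*(2*(d:ℝ))^d, by positivity, ?_⟩
  intro Q hQ x r R hr hrR
  unfold polySeminorm
  have hR : 0 < R := hr.trans_le hrR
  set F : EuclideanSpace ℝ (Fin n) → ℝ := fun z => MvPolynomial.eval (fun i => z i) Q with hF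
  have hFc : Continuous F := by
    have h1 : Continuous fun z : EuclideanSpace ℝ (Fin n) => (fun i => z i : Fin n → ℝ) :=
      PiLp.continuous_ofLp _ _
    have h2 : Continuous fun v : Fin n → ℝ => MvPolynomial.eval v Q :=
      MvPolynomial.continuous_eval Q
    exact h2.comp h1
  -- boundedness on the closed ball
  obtain ⟨M, hM⟩ : ∃ M, ∀ z ∈ Metric.closedBall x r, |F z| ≤ M := by
    obtain ⟨M, hM⟩ := ((isCompact_closedBall x r).image (continuous_abs.comp hFc)).bddAbove
    exact ⟨M, fun z hz => hM (Set.mem_image_of_mem _ hz)⟩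
  set Sr := {t : ℝ | ∃ a ∈ Metric.ball x r, ∃ b ∈ Metric.ball x r,
    t = |MvPolynomial.eval (fun i => a i) Q - MvPolynomial.eval (fun i => b i) Q|} with hSr
  have hbdd : BddAbove Sr := by
    refine ⟨2*M, ?_⟩
    rintro t ⟨a, ha, b, hb, rfl⟩
    have h1 := hM a (Metric.ball_subset_closedBall ha)
    have h2 := hM b (Metric.ball_subset_closedBall hb)
    have h3 : |F a - F b| ≤ |F a| + |F b| := abs_sub _ _
    simp only [hF] at h1 h2 h3
    linarith
  have hN0 : 0 ≤ sSup Sr := by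
    refine le_csSup hbdd ⟨x, Metric.mem_ball_self hr, x, Metric.mem_ball_self hr, by simp⟩
  set N := sSup Sr with hN
  -- key pointwise bound
  have key : ∀ a ∈ Metric.ball x R,
      |F a - F x| ≤ ((d:ℝ)+1) * ((2*(d:ℝ))*(R/r))^d * N := by
    intro a ha
    set u : ℝ := r / (2*R) with hu
    have hu0 : 0 < u := by positivity
    have hu1 : u ≤ 1 := by
      rw [hu, div_le_one (by positivity)]; linarith
    set g : Fin n → Polynomial ℝ :=
      fun i => Polynomial.C (x i) + Polynomial.C (a i - x i) * Polynomial.X with hg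
    set q : Polynomial ℝ := MvPolynomial.aeval g Q with hq
    have hgdeg : ∀ i, (g i).natDegree ≤ 1 := by
      intro i
      have h1 : (Polynomial.C (a i - x i) * Polynomial.X).natDegree ≤ 1 :=
        (Polynomial.natDegree_mul_le).trans (by simp)
      exact (Polynomial.natDegree_add_le _ _).trans (max_le (by simp) h1)
    have hqdeg : q.natDegree ≤ d := (myNatDegreeAeval Q g hgdeg).trans hQ
    have hqev : ∀ t : ℝ, q.eval t = MvPolynomial.eval (fun i => x i + (a i - x i) * t) Q := by
      intro t; rw [hq, myEvalAeval]
      have he : (fun i => (g i).eval t) = fun i => x i + (a i - x i) * t := by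
        funext i; simp [hg]
      rw [he]
    set v : ℕ → ℝ := fun j => (j:ℝ) * u / (d:ℝ) with hv
    set s : Finset ℕ := Finset.range (d+1) with hs
    have hinj : Set.InjOn v s := by
      intro j _ k _ hjk
      simp only [hv] at hjk
      have hd' : (d:ℝ) ≠ 0 := ne_of_gt hd0
      have hu' : u ≠ 0 := ne_of_gt hu0
      field_simp at hjk
      exact_mod_cast hjk
    have hv0 : ∀ j ∈ s, 0 ≤ v j := by intro j _; rw [hv]; positivity
    have hvu : ∀ j ∈ s, v j ≤ u := by
      intro j hj
      have hj' : (j:ℝ) ≤ (d:ℝ) := by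
        exact_mod_cast Nat.lt_succ_iff.mp (Finset.mem_range.mp hj)
      rw [hv, div_le_iff₀ hd0]
      nlinarith [hu0.le]
    have hpt : ∀ t : ℝ, 0 ≤ t → t ≤ u → (x + t • (a - x)) ∈ Metric.ball x r := by
      intro t ht0 htu
      rw [Metric.mem_ball, dist_eq_norm, add_sub_cancel_left, norm_smul, Real.norm_eq_abs,
        abs_of_nonneg ht0]
      have h1 : ‖a - x‖ < R := by
        rw [← dist_eq_norm]; exact Metric.mem_ball.mp ha
      have h2 : t * ‖a - x‖ ≤ u * ‖a - x‖ := by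
        nlinarith [norm_nonneg (a - x)]
      have h3 : u * ‖a - x‖ < u * R := by
        exact mul_lt_mul_of_pos_left h1 hu0
      have h4 : u * R = r / 2 := by rw [hu]; field_simp
      linarith
    have hcoord : ∀ t : ℝ, ∀ i, (x + t • (a - x)) i = x i + (a i - x i) * t := by
      intro t i
      simp only [PiLp.add_apply, PiLp.smul_apply, PiLp.sub_apply, smul_eq_mul]
      ring
    have hcard : s.card = d + 1 := Finset.card_range _
    have hdegq : q.degree < (s.card : ℕ) := by
      rw [hcard]
      calc q.degree ≤ (q.natDegree : WithBot ℕ) := Polynomial.degree_le_natDegree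
        _ ≤ ((d:ℕ) : WithBot ℕ) := by exact_mod_cast hqdeg
        _ < ((d+1 : ℕ) : WithBot ℕ) := by exact_mod_cast Nat.lt_succ_self d
    have hq1 : q.eval 1 = ∑ j ∈ s, q.eval (v j) * (Lagrange.basis s v j).eval 1 := by
      conv_lhs => rw [Lagrange.eq_interpolate hinj hdegq]
      rw [Lagrange.interpolate_apply, Polynomial.eval_finset_sum]
      simp
    have hone : (1:ℝ) = ∑ j ∈ s, (Lagrange.basis s v j).eval 1 := by
      have h1 := Lagrange.sum_basis hinj ⟨0, by simp [hs]⟩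
      have h2 := congrArg (Polynomial.eval (1:ℝ)) h1
      rw [Polynomial.eval_finset_sum] at h2
      simpa using h2.symm
    set K : ℝ := 2*(d:ℝ)*(R/r) with hK
    have hK1 : 1 ≤ K := by
      rw [hK]
      have : 1 ≤ R / r := (one_le_div hr).mpr hrR
      nlinarith
    have hB : ∀ j ∈ s, |(Lagrange.basis s v j).eval 1| ≤ K^d := by
      intro j hj
      rw [Lagrange.basis, Polynomial.eval_prod, Finset.abs_prod]
      have hcard' : (s.erase j).card = d := by
        rw [Finset.card_erase_of_mem hj, hcard]
        omega
      calc ∏ k ∈ s.erase j, |(Lagrange.basisDivisor (v j) (v k)).eval 1|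
          ≤ ∏ _k ∈ s.erase j, K := by
            refine Finset.prod_le_prod (fun k _ => abs_nonneg _) (fun k hk => ?_)
            have hk' := Finset.mem_of_mem_erase hk
            have hjk : j ≠ k := (Finset.ne_of_mem_erase hk).symm
            have habs : u / (d:ℝ) ≤ |v j - v k| := by
              have heq : v j - v k = ((j:ℝ) - (k:ℝ)) * (u/(d:ℝ)) := by rw [hv]; ring
              rw [heq, abs_mul, abs_of_pos (by positivity : (0:ℝ) < u/(d:ℝ))]
              have hz : ((j:ℤ) - (k:ℤ)) ≠ 0 := by
                simp only [sub_ne_zero]; exact_mod_cast hjk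
              have h1 : (1:ℝ) ≤ |(((j:ℤ) - (k:ℤ) : ℤ) : ℝ)| := by
                exact_mod_cast Int.one_le_abs hz
              push_cast at h1
              nlinarith [hu0, hd0, div_pos hu0 hd0]
            have h1v : |(1:ℝ) - v k| ≤ 1 := by
              have h1 := hv0 k hk'
              have h2 := hvu k hk'
              rw [abs_le]; constructor <;> linarith
            rw [Lagrange.basisDivisor]
            simp only [Polynomial.eval_mul, Polynomial.eval_C, Polynomial.eval_sub,
              Polynomial.eval_X, abs_mul, abs_inv]
            have hud : 0 < u / (d:ℝ) := div_pos hu0 hd0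
            have hvjk : 0 < |v j - v k| := lt_of_lt_of_le hud habs
            have h3 : |v j - v k|⁻¹ ≤ (u/(d:ℝ))⁻¹ := by
              exact inv_anti₀ hud habs
            have h4 : (u/(d:ℝ))⁻¹ = K := by
              rw [hu, hK]; field_simp
            calc |v j - v k|⁻¹ * |1 - v k| ≤ (u/(d:ℝ))⁻¹ * 1 := by
                  exact mul_le_mul h3 h1v (abs_nonneg _) (by positivity)
              _ = K := by rw [mul_one, h4]
        _ = K ^ d := by rw [Finset.prod_const, hcard']
    have hterm : ∀ j ∈ s, |q.eval (v j) - q.eval 0| ≤ N := by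
      intro j hj
      refine le_csSup hbdd ?_
      refine ⟨x + (v j) • (a - x), hpt _ (hv0 j hj) (hvu j hj), x, Metric.mem_ball_self hr, ?_⟩
      have e1 : (fun i => (x + (v j) • (a - x)) i) = fun i => x i + (a i - x i) * (v j) := by
        funext i; rw [hcoord]
      have e2 : (fun i => x i + (a i - x i) * (0:ℝ)) = fun i => x i := by
        funext i; ring
      rw [hqev, hqev, e1, e2]
    have hsum : q.eval 1 - q.eval 0
        = ∑ j ∈ s, (q.eval (v j) - q.eval 0) * (Lagrange.basis s v j).eval 1 := by
      simp only [sub_mul]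
      rw [Finset.sum_sub_distrib, ← Finset.mul_sum, ← hq1, ← hone, mul_one]
    have hKd : (0:ℝ) ≤ K^d := by positivity
    have h2 : |q.eval 1 - q.eval 0| ≤ ((d:ℝ)+1) * (K^d * N) := by
      rw [hsum]
      refine (Finset.abs_sum_le_sum_abs _ _).trans ?_
      have hle : ∀ j ∈ s, |(q.eval (v j) - q.eval 0) * (Lagrange.basis s v j).eval 1|
          ≤ K^d * N := by
        intro j hj
        rw [abs_mul, mul_comm (K^d)]
        exact mul_le_mul (hterm j hj) (hB j hj) (abs_nonneg _) hN0
      calc ∑ j ∈ s, |(q.eval (v j) - q.eval 0) * (Lagrange.basis s v j).eval 1|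
          ≤ ∑ _j ∈ s, K^d * N := Finset.sum_le_sum hle
        _ = ((d:ℝ)+1) * (K^d * N) := by
            rw [Finset.sum_const, hcard, nsmul_eq_mul]; push_cast; ring
    have hqa : q.eval 1 = F a := by
      rw [hqev]
      have e1 : (fun i => x i + (a i - x i) * (1:ℝ)) = fun i => a i := by funext i; ring
      rw [e1]
    have hqx : q.eval 0 = F x := by
      rw [hqev]
      have e2 : (fun i => x i + (a i - x i) * (0:ℝ)) = fun i => x i := by funext i; ring
      rw [e2]
    rw [hqa, hqx] at h2
    calc |F a - F x| ≤ ((d:ℝ)+1) * (K^d * N) := h2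
      _ = ((d:ℝ)+1) * ((2*(d:ℝ))*(R/r))^d * N := by rw [hK]; ring
  -- conclude
  have hRHS : 2*((d:ℝ)+1)*(2*(d:ℝ))^d * (R/r)^d * N
      = ((d:ℝ)+1) * ((2*(d:ℝ))*(R/r))^d * N + ((d:ℝ)+1) * ((2*(d:ℝ))*(R/r))^d * N := by
    rw [mul_pow]; ring
  have hRHS0 : 0 ≤ 2*((d:ℝ)+1)*(2*(d:ℝ))^d * (R/r)^d * N := by
    have h1 : (0:ℝ) ≤ 2*((d:ℝ)+1)*(2*(d:ℝ))^d * (R/r)^d := by positivity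
    exact mul_nonneg h1 hN0
  refine Real.sSup_le ?_ hRHS0
  rintro t ⟨a, ha, b, hb, rfl⟩
  have h1 : |F a - F b| ≤ |F a - F x| + |F b - F x| := by
    rw [abs_sub_comm (F b)]
    exact abs_sub_le _ _ _
  have h2 := key a ha
  have h3 := key b hb
  simp only [hF] at h1 h2 h3 ⊢
  rw [hRHS]
  linarith
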